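/- arXiv:2510.12027 — 2 statements merged into one kernel-verified Lean document; each statement's English description precedes it below -/
import Mathlib

section
/- (Bounded difference / McDiarmid inequality) Let (Ω, 𝒜) be a measurable space, N ≥ 1, and let F : Ω^N → ℝ be a measurable function for which there exist nonnegative constants a_1, ..., a_N with Σ_{j=1}^N a_j² > 0 such that |F(x_1, ..., x_j, ..., x_N) - F(x_1, ..., x_j', ..., x_N)| ≤ a_j for every index 1 ≤ j ≤ N and all points x_1, ..., x_N, x_j' ∈ Ω. Let X_1, ..., X_N be independent Ω-valued random variables on a probability space (ω, 𝔽, ℙ). Then for every ε > 0, ℙ( |F(X_1, ..., X_N) - E[F(X_1, ..., X_N)]| ≥ ε ) ≤ 2 exp( -2ε² / Σ_{j=1}^N a_j² ). -/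
open MeasureTheory ProbabilityTheory

section McDiarmidAux

/-- Key scalar inequality for Hoeffding's lemma. -/
lemma mcd_key (p : ℝ) (hp0 : 0 ≤ p) (hp1 : p ≤ 1) (u : ℝ) :
    1 - p + p * Real.exp u ≤ Real.exp (p * u + u ^ 2 / 8) := by
  set D : ℝ → ℝ := fun v => 1 - p + p * Real.exp v with hDdef
  have hD : ∀ v, 0 < D v := by
    intro v
    simp only [hDdef]
    rcases eq_or_lt_of_le hp0 with h | h
    · simp [← h]
    · have h1 := Real.exp_pos v
      nlinarith
  have hD' : ∀ v, HasDerivAt D (p * Real.exp v) v := by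
    intro v
    simpa [hDdef] using ((Real.hasDerivAt_exp v).const_mul p).const_add (1 - p)
  set φ' : ℝ → ℝ := fun v => p + v / 4 - p * Real.exp v / D v with hφ'def
  set φ : ℝ → ℝ := fun v => p * v + v ^ 2 / 8 - Real.log (D v) with hφdef
  have hφ : ∀ v, HasDerivAt φ (φ' v) v := by
    intro v
    have h1 : HasDerivAt (fun w : ℝ => p * w) p v := by
      simpa using (hasDerivAt_id v).const_mul p
    have h2 : HasDerivAt (fun w : ℝ => w ^ 2 / 8) (v / 4) v := by
      have := (hasDerivAt_pow 2 v).div_const 8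
      exact this.congr_deriv (by ring)
    have h3 : HasDerivAt (fun w => Real.log (D w)) (p * Real.exp v / D v) v :=
      (hD' v).log (hD v).ne'
    exact (h1.add h2).sub h3
  have hφ'' : ∀ v, HasDerivAt φ' (1 / 4 - p * (1 - p) * Real.exp v / (D v) ^ 2) v := by
    intro v
    have h1 : HasDerivAt (fun w : ℝ => p + w / 4) (1 / 4) v := by
      simpa using ((hasDerivAt_id v).div_const 4).const_add p
    have h2 : HasDerivAt (fun w => p * Real.exp w / D w)
        ((p * Real.exp v * D v - p * Real.exp v * (p * Real.exp v)) / (D v) ^ 2) v :=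
      ((Real.hasDerivAt_exp v).const_mul p).div (hD' v) (hD v).ne'
    have := h1.sub h2
    refine this.congr_deriv ?_
    have hne := (hD v).ne'
    field_simp
    ring
  have hmono : Monotone φ' := by
    apply monotone_of_deriv_nonneg
    · exact fun v => (hφ'' v).differentiableAt
    · intro v
      rw [(hφ'' v).deriv]
      have h4 : 4 * ((1 - p) * (p * Real.exp v)) ≤ (D v) ^ 2 := by
        have := sq_nonneg ((1 - p) - p * Real.exp v)
        simp only [hDdef]
        nlinarith
      have hD2 : (0:ℝ) < (D v) ^ 2 := pow_pos (hD v) 2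
      rw [sub_nonneg, div_le_iff₀ hD2]
      generalize hE : D v = E at h4 ⊢
      linarith
  have hφ'0 : φ' 0 = 0 := by simp [hφ'def, hDdef]
  have hφ0 : φ 0 = 0 := by simp [hφdef, hDdef]
  have hφnonneg : ∀ v, 0 ≤ φ v := by
    intro v
    rcases le_total 0 v with h | h
    · have hm : MonotoneOn φ (Set.Ici 0) := by
        apply monotoneOn_of_deriv_nonneg (convex_Ici 0)
        · exact Continuous.continuousOn
            (continuous_iff_continuousAt.2 fun x => (hφ x).differentiableAt.continuousAt)
        · intro x hx; exact (hφ x).differentiableAt.differentiableWithinAt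
        · intro x hx
          rw [(hφ x).deriv]
          rw [← hφ'0]
          exact hmono (le_of_lt (by simpa using hx))
      have := hm (Set.self_mem_Ici) (Set.mem_Ici.2 h) h
      simpa [hφ0] using this
    · have hm : AntitoneOn φ (Set.Iic 0) := by
        apply antitoneOn_of_deriv_nonpos (convex_Iic 0)
        · exact Continuous.continuousOn
            (continuous_iff_continuousAt.2 fun x => (hφ x).differentiableAt.continuousAt)
        · intro x hx; exact (hφ x).differentiableAt.differentiableWithinAt
        · intro x hx
          rw [(hφ x).deriv]
          rw [← hφ'0]
          exact hmono (le_of_lt (by simpa using hx))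
      have := hm (Set.mem_Iic.2 h) (Set.self_mem_Iic) h
      simpa [hφ0] using this
  have hlog : Real.log (D u) ≤ p * u + u ^ 2 / 8 := by
    have := hφnonneg u
    simp only [hφdef] at this
    linarith
  calc D u = Real.exp (Real.log (D u)) := (Real.exp_log (hD u)).symm
    _ ≤ Real.exp (p * u + u ^ 2 / 8) := Real.exp_le_exp.2 hlog

/-- Hoeffding's lemma, integral form, with explicit bounds. -/
lemma mcd_hoeffding_Icc {α : Type*} [MeasurableSpace α] (ν : Measure α) [IsProbabilityMeasure ν]
    (f : α → ℝ) (hf : Measurable f) (A B : ℝ) (hAB : A ≤ B)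
    (hfA : ∀ x, A ≤ f x) (hfB : ∀ x, f x ≤ B) (t : ℝ) :
    ∫ x, Real.exp (t * f x) ∂ν ≤ Real.exp (t * ∫ x, f x ∂ν + t ^ 2 * (B - A) ^ 2 / 8) := by
  have hfint : Integrable f ν := by
    refine (integrable_const (max |A| |B|)).mono' hf.aestronglyMeasurable ?_
    refine Filter.Eventually.of_forall fun x => ?_
    rw [Real.norm_eq_abs, abs_le]
    constructor
    · have : -(max |A| |B|) ≤ -|A| := by simp [neg_le_neg_iff]
      calc -(max |A| |B|) ≤ -|A| := this
        _ ≤ A := neg_abs_le A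
        _ ≤ f x := hfA x
    · calc f x ≤ B := hfB x
        _ ≤ |B| := le_abs_self B
        _ ≤ max |A| |B| := le_max_right _ _
  have hmA : A ≤ ∫ x, f x ∂ν := by
    calc A = ∫ _, A ∂ν := by simp
      _ ≤ ∫ x, f x ∂ν := integral_mono (integrable_const A) hfint hfA
  have hmB : (∫ x, f x ∂ν) ≤ B := by
    calc (∫ x, f x ∂ν) ≤ ∫ _, B ∂ν := integral_mono hfint (integrable_const B) hfB
      _ = B := by simp
  rcases eq_or_lt_of_le hAB with rfl | hlt
  · -- A = B : f constant
    have hfx : ∀ x, f x = A := fun x => le_antisymm (hfB x) (hfA x)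
    have h1 : (∫ x, Real.exp (t * f x) ∂ν) = Real.exp (t * A) := by
      simp_rw [hfx]; simp
    have h2 : (∫ x, f x ∂ν) = A := le_antisymm hmB hmA
    rw [h1, h2]
    simp
  · -- A < B
    have hBA : (0:ℝ) < B - A := sub_pos.2 hlt
    set m := ∫ x, f x ∂ν with hm
    set p := (m - A) / (B - A) with hp
    have hp0 : 0 ≤ p := div_nonneg (by linarith) hBA.le
    have hp1 : p ≤ 1 := by
      rw [hp, div_le_one hBA]; linarith
    set u := t * (B - A) with hu
    -- pointwise convexity bound
    have hpt : ∀ x, Real.exp (t * f x) ≤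
        (B - f x) / (B - A) * Real.exp (t * A) + (f x - A) / (B - A) * Real.exp (t * B) := by
      intro x
      have hl1 : (0:ℝ) ≤ (B - f x) / (B - A) := div_nonneg (by linarith [hfB x]) hBA.le
      have hl2 : (0:ℝ) ≤ (f x - A) / (B - A) := div_nonneg (by linarith [hfA x]) hBA.le
      have hsum : (B - f x) / (B - A) + (f x - A) / (B - A) = 1 := by
        field_simp; ring
      have := convexOn_exp.2 (Set.mem_univ (t * A)) (Set.mem_univ (t * B)) hl1 hl2 hsum
      simp only [smul_eq_mul] at this
      have harg : (B - f x) / (B - A) * (t * A) + (f x - A) / (B - A) * (t * B) = t * f x := by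
        field_simp; ring
      rw [harg] at this
      exact this
    -- integrate
    have hi1 : Integrable (fun x => (B - f x) / (B - A) * Real.exp (t * A)) ν :=
      (((integrable_const B).sub hfint).div_const (B - A)).mul_const _
    have hi2 : Integrable (fun x => (f x - A) / (B - A) * Real.exp (t * B)) ν :=
      ((hfint.sub (integrable_const A)).div_const (B - A)).mul_const _
    have hrhs_int : Integrable (fun x =>
        (B - f x) / (B - A) * Real.exp (t * A) + (f x - A) / (B - A) * Real.exp (t * B)) ν :=
      hi1.add hi2
    have hlhs_int : Integrable (fun x => Real.exp (t * f x)) ν := by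
      refine (integrable_const (Real.exp (|t| * max |A| |B|))).mono'
        ((hf.const_mul t).exp.aestronglyMeasurable) ?_
      refine Filter.Eventually.of_forall fun x => ?_
      rw [Real.norm_eq_abs, abs_of_pos (Real.exp_pos _), Real.exp_le_exp]
      calc t * f x ≤ |t * f x| := le_abs_self _
        _ = |t| * |f x| := abs_mul _ _
        _ ≤ |t| * max |A| |B| := by
            refine mul_le_mul_of_nonneg_left ?_ (abs_nonneg t)
            rw [abs_le]
            constructor
            · calc -(max |A| |B|) ≤ -|A| := by simp
                _ ≤ A := neg_abs_le A
                _ ≤ f x := hfA x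
            · calc f x ≤ B := hfB x
                _ ≤ |B| := le_abs_self B
                _ ≤ max |A| |B| := le_max_right _ _
    have hint_le := integral_mono hlhs_int hrhs_int hpt
    have hval : (∫ x, ((B - f x) / (B - A) * Real.exp (t * A)
        + (f x - A) / (B - A) * Real.exp (t * B)) ∂ν)
        = (1 - p) * Real.exp (t * A) + p * Real.exp (t * B) := by
      rw [integral_add hi1 hi2]
      rw [integral_mul_const, integral_mul_const]
      congr 1
      · congr 1
        rw [integral_div, integral_sub (integrable_const B) hfint]
        simp only [integral_const, measure_univ, probReal_univ, ENNReal.toReal_one, smul_eq_mul, one_mul]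
        rw [hp]
        field_simp
        rw [hm]; ring
      · congr 1
        rw [integral_div, integral_sub hfint (integrable_const A)]
        simp only [integral_const, measure_univ, probReal_univ, ENNReal.toReal_one, smul_eq_mul, one_mul]
        rw [hp, hm]
    have hkey := mcd_key p hp0 hp1 u
    have hfinal : (1 - p) * Real.exp (t * A) + p * Real.exp (t * B)
        ≤ Real.exp (t * m + t ^ 2 * (B - A) ^ 2 / 8) := by
      have hexpB : Real.exp (t * B) = Real.exp (t * A) * Real.exp u := by
        rw [← Real.exp_add]; congr 1; rw [hu]; ring
      have h1 : (1 - p) * Real.exp (t * A) + p * Real.exp (t * B)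
          = Real.exp (t * A) * (1 - p + p * Real.exp u) := by
        rw [hexpB]; ring
      rw [h1]
      calc Real.exp (t * A) * (1 - p + p * Real.exp u)
          ≤ Real.exp (t * A) * Real.exp (p * u + u ^ 2 / 8) :=
            mul_le_mul_of_nonneg_left hkey (Real.exp_pos _).le
        _ = Real.exp (t * A + (p * u + u ^ 2 / 8)) := (Real.exp_add _ _).symm
        _ = Real.exp (t * m + t ^ 2 * (B - A) ^ 2 / 8) := by
            congr 1
            have hpu : p * u = t * (m - A) := by
              rw [hp, hu]; field_simp
            have hu2 : u ^ 2 = t ^ 2 * (B - A) ^ 2 := by rw [hu]; ring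
            rw [hpu, hu2]; ring
    calc (∫ x, Real.exp (t * f x) ∂ν) ≤ _ := hint_le
      _ = (1 - p) * Real.exp (t * A) + p * Real.exp (t * B) := hval
      _ ≤ _ := hfinal

/-- Hoeffding's lemma with oscillation hypothesis. -/
lemma mcd_hoeffding_osc {α : Type*} [MeasurableSpace α] [Nonempty α]
    (ν : Measure α) [IsProbabilityMeasure ν]
    (f : α → ℝ) (hf : Measurable f) (L : ℝ) (hL : 0 ≤ L)
    (hosc : ∀ x y, |f x - f y| ≤ L) (t : ℝ) :
    ∫ x, Real.exp (t * f x) ∂ν ≤ Real.exp (t * ∫ x, f x ∂ν + t ^ 2 * L ^ 2 / 8) := by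
  obtain ⟨x₀⟩ := ‹Nonempty α›
  have hne : (Set.range f).Nonempty := ⟨f x₀, Set.mem_range_self x₀⟩
  have hbdd : BddBelow (Set.range f) := by
    refine ⟨f x₀ - L, ?_⟩
    rintro y ⟨x, rfl⟩
    have := hosc x₀ x
    rw [abs_le] at this
    linarith [this.1]
  set A := sInf (Set.range f) with hA
  have hfA : ∀ x, A ≤ f x := fun x => csInf_le hbdd (Set.mem_range_self x)
  have hfB : ∀ x, f x ≤ A + L := by
    intro x
    have : f x - L ≤ A := by
      refine le_csInf hne ?_
      rintro y ⟨x', rfl⟩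
      have := hosc x x'
      rw [abs_le] at this
      linarith [this.1]
    linarith
  have := mcd_hoeffding_Icc ν f hf A (A + L) (by linarith) hfA hfB t
  simpa using this

/-- Total oscillation bound by telescoping coordinate changes. -/
lemma mcd_osc_total {N : ℕ} {Ω : Type*} (F : (Fin N → Ω) → ℝ) (a : Fin N → ℝ)
    (hbd : ∀ (x : Fin N → Ω) (j : Fin N) (x' : Ω),
      |F x - F (Function.update x j x')| ≤ a j)
    (x y : Fin N → Ω) : |F x - F y| ≤ ∑ j, a j := by
  classical
  have key : ∀ s : Finset (Fin N), |F x - F (s.piecewise y x)| ≤ ∑ j ∈ s, a j := by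
    intro s
    induction s using Finset.induction_on with
    | empty => simp
    | @insert j s hj ih =>
      rw [Finset.piecewise_insert, Finset.sum_insert hj]
      calc |F x - F (Function.update (s.piecewise y x) j (y j))|
          ≤ |F x - F (s.piecewise y x)|
            + |F (s.piecewise y x) - F (Function.update (s.piecewise y x) j (y j))| := by
              have := abs_sub_le (F x) (F (s.piecewise y x))
                (F (Function.update (s.piecewise y x) j (y j)))
              linarith
        _ ≤ (∑ j ∈ s, a j) + a j := add_le_add ih (hbd _ _ _)
        _ = a j + ∑ j ∈ s, a j := by ring
  have := key Finset.univ
  simpa [Finset.piecewise_univ] using this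

/-- Tensorization: MGF bound for functions of independent coordinates (product measure). -/
lemma mcd_mgf_pi : ∀ (N : ℕ) {Ω : Type*} [MeasurableSpace Ω] (μ : Fin N → Measure Ω)
    [∀ i, IsProbabilityMeasure (μ i)] (F : (Fin N → Ω) → ℝ) (_ : Measurable F)
    (a : Fin N → ℝ) (_ : ∀ j, 0 ≤ a j)
    (_ : ∀ (x : Fin N → Ω) (j : Fin N) (x' : Ω),
      |F x - F (Function.update x j x')| ≤ a j) (t : ℝ),
    ∫ x, Real.exp (t * F x) ∂(Measure.pi μ)
      ≤ Real.exp (t * ∫ x, F x ∂(Measure.pi μ) + t ^ 2 * (∑ j, a j ^ 2) / 8) := by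
  intro N
  induction N with
  | zero =>
    intro Ω _ μ _ F hF a ha hbd t
    have hc : ∀ x : Fin 0 → Ω, F x = F default := fun x => congrArg F (Subsingleton.elim x _)
    simp_rw [hc]
    rw [integral_const, integral_const]
    simp [measure_univ]
  | succ n ih =>
    intro Ω _ μ _ F hF a ha hbd t
    -- Ω is nonempty
    have hΩ : Nonempty Ω := by
      by_contra h
      have : IsEmpty Ω := not_nonempty_iff.1 h
      have h1 : (μ 0) Set.univ = 1 := measure_univ
      rw [Set.univ_eq_empty_iff.2 this] at h1
      simp at h1
    set e := MeasurableEquiv.piFinSuccAbove (fun _ : Fin (n + 1) => Ω) 0 with he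
    have hmp : MeasurePreserving e (Measure.pi μ)
        ((μ 0).prod (Measure.pi fun j => μ ((0 : Fin (n+1)).succAbove j))) :=
      measurePreserving_piFinSuccAbove μ 0
    set π' : Measure (Fin n → Ω) := Measure.pi fun j => μ ((0 : Fin (n+1)).succAbove j) with hπ'
    haveI : ∀ j : Fin n, IsProbabilityMeasure (μ ((0 : Fin (n+1)).succAbove j)) :=
      fun j => inferInstance
    haveI : IsProbabilityMeasure π' := by rw [hπ']; infer_instance
    set G : Ω × (Fin n → Ω) → ℝ := fun z => F (Fin.cons z.1 z.2) with hG
    have hesymm : ∀ z : Ω × (Fin n → Ω), e.symm z = Fin.cons z.1 z.2 := by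
      intro z
      simp [he, MeasurableEquiv.piFinSuccAbove_symm_apply, Fin.insertNthEquiv,
        Fin.insertNth_zero]
    have hGmeas : Measurable G := by
      have : G = F ∘ e.symm := by
        funext z; simp [hG, hesymm z]
      rw [this]
      exact hF.comp e.symm.measurable
    -- transfer integrals through e
    have hint_exp : ∫ x, Real.exp (t * F x) ∂(Measure.pi μ)
        = ∫ z, Real.exp (t * G z) ∂((μ 0).prod π') := by
      rw [← hmp.integral_comp e.measurableEmbedding (fun z => Real.exp (t * G z))]
      congr 1
      funext x
      rw [hG]
      show Real.exp (t * F x) = Real.exp (t * F (Fin.cons (e x).1 (e x).2))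
      rw [← hesymm (e x), e.symm_apply_apply]
    have hint_F : ∫ x, F x ∂(Measure.pi μ) = ∫ z, G z ∂((μ 0).prod π') := by
      rw [← hmp.integral_comp e.measurableEmbedding G]
      congr 1
      funext x
      rw [hG]
      show F x = F (Fin.cons (e x).1 (e x).2)
      rw [← hesymm (e x), e.symm_apply_apply]
    -- boundedness of F and G
    set x₀ : Fin (n+1) → Ω := fun _ => Classical.arbitrary Ω with hx₀
    set C : ℝ := |F x₀| + ∑ j, a j with hC
    have hFbd : ∀ x, |F x| ≤ C := by
      intro x
      have h1 := mcd_osc_total F a hbd x x₀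
      rw [hC]
      have := abs_sub_abs_le_abs_sub (F x) (F x₀)
      linarith
    have hGbd : ∀ z, |G z| ≤ C := fun z => hFbd _
    have hexpC : ∀ z, Real.exp (t * G z) ≤ Real.exp (|t| * C) := by
      intro z
      rw [Real.exp_le_exp]
      calc t * G z ≤ |t * G z| := le_abs_self _
        _ = |t| * |G z| := abs_mul _ _
        _ ≤ |t| * C := mul_le_mul_of_nonneg_left (hGbd z) (abs_nonneg t)
    have hexp_int : Integrable (fun z => Real.exp (t * G z)) ((μ 0).prod π') := by
      refine (integrable_const (Real.exp (|t| * C))).mono'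
        ((hGmeas.const_mul t).exp.aestronglyMeasurable) ?_
      exact Filter.Eventually.of_forall fun z => by
        rw [Real.norm_eq_abs, abs_of_pos (Real.exp_pos _)]; exact hexpC z
    have hG_int : Integrable G ((μ 0).prod π') := by
      refine (integrable_const C).mono' hGmeas.aestronglyMeasurable ?_
      exact Filter.Eventually.of_forall fun z => by rw [Real.norm_eq_abs]; exact hGbd z
    -- Fubini
    have hfub : ∫ z, Real.exp (t * G z) ∂((μ 0).prod π')
        = ∫ y, ∫ x, Real.exp (t * G (x, y)) ∂(μ 0) ∂π' :=
      integral_prod_symm _ hexp_int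
    set g : (Fin n → Ω) → ℝ := fun y => ∫ x, G (x, y) ∂(μ 0) with hg
    have hgmeas : Measurable g :=
      (hGmeas.stronglyMeasurable.integral_prod_left').measurable
    have hsec_meas : ∀ y, Measurable (fun x => G (x, y)) := fun y =>
      hGmeas.comp (measurable_id.prodMk measurable_const)
    have hsec_int : ∀ y, Integrable (fun x => G (x, y)) (μ 0) := by
      intro y
      refine (integrable_const C).mono' (hsec_meas y).aestronglyMeasurable ?_
      exact Filter.Eventually.of_forall fun x => by rw [Real.norm_eq_abs]; exact hGbd _
    have hgbd : ∀ y, |g y| ≤ C := by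
      intro y
      rw [hg]
      have := norm_integral_le_of_norm_le_const
        (μ := μ 0) (f := fun x => G (x, y)) (C := C)
        (Filter.Eventually.of_forall fun x => by rw [Real.norm_eq_abs]; exact hGbd _)
      simpa [measure_univ] using this
    -- bounded differences of g
    have hgdiff : ∀ (y : Fin n → Ω) (j : Fin n) (x' : Ω),
        |g y - g (Function.update y j x')| ≤ a ((0 : Fin (n+1)).succAbove j) := by
      intro y j x'
      have heq : ∀ x : Ω, G (x, Function.update y j x')
          = F (Function.update (Fin.cons x y) j.succ x') := by
        intro x
        rw [hG]
        show F (Fin.cons x (Function.update y j x')) = _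
        rw [Fin.cons_update]
      have hsub : g y - g (Function.update y j x')
          = ∫ x, (G (x, y) - G (x, Function.update y j x')) ∂(μ 0) := by
        rw [hg, integral_sub (hsec_int y) (hsec_int _)]
      rw [hsub]
      have hptbd : ∀ x : Ω, ‖G (x, y) - G (x, Function.update y j x')‖ ≤ a j.succ := by
        intro x
        rw [Real.norm_eq_abs, heq x]
        exact hbd (Fin.cons x y) j.succ x'
      have := norm_integral_le_of_norm_le_const (μ := μ 0)
        (f := fun x => G (x, y) - G (x, Function.update y j x'))
        (Filter.Eventually.of_forall hptbd)
      simpa [measure_univ] using this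
    -- inner Hoeffding bound
    have hinner : ∀ y, ∫ x, Real.exp (t * G (x, y)) ∂(μ 0)
        ≤ Real.exp (t * g y + t ^ 2 * (a 0) ^ 2 / 8) := by
      intro y
      refine mcd_hoeffding_osc (μ 0) (fun x => G (x, y)) (hsec_meas y) (a 0) (ha 0) ?_ t
      intro x x'
      show |G (x, y) - G (x', y)| ≤ a 0
      have h1 : G (x', y) = F (Function.update (Fin.cons x y) 0 x') := by
        rw [hG]
        show F (Fin.cons x' y) = _
        rw [Fin.update_cons_zero]
      rw [h1]
      exact hbd (Fin.cons x y) 0 x'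
    -- integrate the inner bound
    have hlhs_int : Integrable (fun y => ∫ x, Real.exp (t * G (x, y)) ∂(μ 0)) π' := by
      refine (integrable_const (Real.exp (|t| * C))).mono'
        (((hGmeas.const_mul t).exp.stronglyMeasurable.integral_prod_left').measurable.aestronglyMeasurable) ?_
      refine Filter.Eventually.of_forall fun y => ?_
      rw [Real.norm_eq_abs, abs_of_nonneg (integral_nonneg fun x => (Real.exp_pos _).le)]
      calc (∫ x, Real.exp (t * G (x, y)) ∂(μ 0))
          ≤ ∫ _, Real.exp (|t| * C) ∂(μ 0) := by
            refine integral_mono ?_ (integrable_const _) (fun x => hexpC _)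
            refine (integrable_const (Real.exp (|t| * C))).mono'
              (((hsec_meas y).const_mul t).exp.aestronglyMeasurable) ?_
            exact Filter.Eventually.of_forall fun x => by
              rw [Real.norm_eq_abs, abs_of_pos (Real.exp_pos _)]; exact hexpC _
        _ = Real.exp (|t| * C) := by simp [measure_univ]
    have hrhs_int : Integrable (fun y => Real.exp (t * g y + t ^ 2 * (a 0) ^ 2 / 8)) π' := by
      refine (integrable_const (Real.exp (|t| * C + t ^ 2 * (a 0) ^ 2 / 8))).mono'
        (((hgmeas.const_mul t).add_const _).exp.aestronglyMeasurable) ?_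
      refine Filter.Eventually.of_forall fun y => ?_
      rw [Real.norm_eq_abs, abs_of_pos (Real.exp_pos _), Real.exp_le_exp]
      have : t * g y ≤ |t| * C := by
        calc t * g y ≤ |t * g y| := le_abs_self _
          _ = |t| * |g y| := abs_mul _ _
          _ ≤ |t| * C := mul_le_mul_of_nonneg_left (hgbd y) (abs_nonneg t)
      exact add_le_add_left this _
    have houter : ∫ y, ∫ x, Real.exp (t * G (x, y)) ∂(μ 0) ∂π'
        ≤ ∫ y, Real.exp (t * g y + t ^ 2 * (a 0) ^ 2 / 8) ∂π' :=
      integral_mono hlhs_int hrhs_int hinner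
    have hpull : ∫ y, Real.exp (t * g y + t ^ 2 * (a 0) ^ 2 / 8) ∂π'
        = Real.exp (t ^ 2 * (a 0) ^ 2 / 8) * ∫ y, Real.exp (t * g y) ∂π' := by
      simp_rw [Real.exp_add]
      rw [integral_mul_const]
      ring
    -- induction hypothesis applied to g
    have hexpg_le := ih (fun j => μ ((0 : Fin (n+1)).succAbove j)) g hgmeas
      (fun j => a ((0 : Fin (n+1)).succAbove j))
      (fun j => ha _) hgdiff t
    -- relate ∫ g to ∫ F
    have hgint : ∫ y, g y ∂π' = ∫ x, F x ∂(Measure.pi μ) := by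
      rw [hint_F, integral_prod_symm _ hG_int]
    have hsum : (∑ j, a j ^ 2)
        = (a 0) ^ 2 + ∑ j : Fin n, a ((0 : Fin (n+1)).succAbove j) ^ 2 := by
      rw [Fin.sum_univ_succ]
      rfl
    calc ∫ x, Real.exp (t * F x) ∂(Measure.pi μ)
        = ∫ y, ∫ x, Real.exp (t * G (x, y)) ∂(μ 0) ∂π' := by rw [hint_exp, hfub]
      _ ≤ ∫ y, Real.exp (t * g y + t ^ 2 * (a 0) ^ 2 / 8) ∂π' := houter
      _ = Real.exp (t ^ 2 * (a 0) ^ 2 / 8) * ∫ y, Real.exp (t * g y) ∂π' := hpull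
      _ ≤ Real.exp (t ^ 2 * (a 0) ^ 2 / 8)
          * Real.exp (t * ∫ y, g y ∂π'
              + t ^ 2 * (∑ j : Fin n, a ((0 : Fin (n+1)).succAbove j) ^ 2) / 8) :=
            mul_le_mul_of_nonneg_left hexpg_le (Real.exp_pos _).le
      _ = Real.exp (t * ∫ x, F x ∂(Measure.pi μ) + t ^ 2 * (∑ j, a j ^ 2) / 8) := by
          rw [← Real.exp_add, hgint, hsum]
          congr 1
          ring

end McDiarmidAux

/-- The joint law of independent random variables is the product of the marginals. -/
lemma mcd_map_pi {Ω : Type*} [MeasurableSpace Ω]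
    {ω : Type*} [MeasurableSpace ω] (P : Measure ω) [IsProbabilityMeasure P]
    {N : ℕ} (X : Fin N → ω → Ω) (hX : ∀ j, Measurable (X j))
    (hindep : iIndepFun X P) :
    P.map (fun w j => X j w) = Measure.pi (fun j => P.map (X j)) := by
  haveI : ∀ j, IsProbabilityMeasure (P.map (X j)) :=
    fun j => Measure.isProbabilityMeasure_map (hX j).aemeasurable
  refine (Measure.pi_eq fun s hs => ?_).symm
  have hXvec : Measurable (fun w j => X j w) := measurable_pi_lambda _ hX
  rw [Measure.map_apply hXvec (MeasurableSet.univ_pi hs)]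
  have hpre : (fun w j => X j w) ⁻¹' Set.pi Set.univ s = ⋂ j ∈ Finset.univ, X j ⁻¹' s j := by
    ext w
    simp [Set.mem_pi]
  rw [hpre, hindep.measure_inter_preimage_eq_mul Finset.univ (fun i _ => hs i)]
  congr 1
  ext j
  rw [Measure.map_apply (hX j) (hs j)]

/-- **Bounded difference (McDiarmid) inequality.**
Let `(Ω, 𝒜)` be a measurable space, `N ≥ 1`, and `F : Ω^N → ℝ` a measurable function for
which there are nonnegative constants `a 1, ..., a N` with `Σ_j (a j)² > 0` such that
changing the `j`-th coordinate changes the value of `F` by at most `a j`.  If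
`X 1, ..., X N` are independent `Ω`-valued random variables on a probability space
`(ω, P)`, then for every `ε > 0`,
`P(|F(X₁,...,X_N) - E[F(X₁,...,X_N)]| ≥ ε) ≤ 2 exp(-2ε² / Σ_j (a j)²)`. -/
theorem mcdiarmid_bounded_difference
    {Ω : Type*} [MeasurableSpace Ω]
    {ω : Type*} [MeasurableSpace ω] (P : Measure ω) [IsProbabilityMeasure P]
    (N : ℕ) (hN : 1 ≤ N)
    (F : (Fin N → Ω) → ℝ) (hF : Measurable F)
    (a : Fin N → ℝ) (ha : ∀ j, 0 ≤ a j) (hsum : 0 < ∑ j, a j ^ 2)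
    (hbd : ∀ (x : Fin N → Ω) (j : Fin N) (x' : Ω),
      |F x - F (Function.update x j x')| ≤ a j)
    (X : Fin N → ω → Ω) (hX : ∀ j, Measurable (X j))
    (hindep : iIndepFun X P) :
    ∀ ε > (0 : ℝ),
      (P {w | ε ≤ |F (fun j => X j w) - ∫ w', F (fun j => X j w') ∂P|}).toReal ≤
        2 * Real.exp (-2 * ε ^ 2 / ∑ j, a j ^ 2) := by
  intro ε hε
  set S : ℝ := ∑ j, a j ^ 2 with hS
  haveI : ∀ j, IsProbabilityMeasure (P.map (X j)) :=
    fun j => Measure.isProbabilityMeasure_map (hX j).aemeasurable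
  have hXvec : Measurable (fun w j => X j w) := measurable_pi_lambda _ hX
  have hmap := mcd_map_pi P X hX hindep
  set μpi := Measure.pi (fun j => P.map (X j)) with hμpi
  haveI : IsProbabilityMeasure μpi := by rw [hμpi]; infer_instance
  set m : ℝ := ∫ x, F x ∂μpi with hm
  -- identify the expectation
  have hEm : ∫ w', F (fun j => X j w') ∂P = m := by
    rw [hm, ← hmap]
    exact (integral_map hXvec.aemeasurable hF.aestronglyMeasurable).symm
  -- boundedness of F
  have hωne : Nonempty ω := by
    by_contra h
    haveI : IsEmpty ω := not_nonempty_iff.1 h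
    have h1 : P Set.univ = 1 := measure_univ
    rw [Set.univ_eq_empty_iff.2 ‹IsEmpty ω›] at h1
    simp at h1
  obtain ⟨w₀⟩ := hωne
  have hΩne : Nonempty Ω := ⟨X ⟨0, hN⟩ w₀⟩
  set x₀ : Fin N → Ω := fun _ => Classical.arbitrary Ω with hx₀
  set C : ℝ := |F x₀| + ∑ j, a j with hCdef
  have hFbd : ∀ x, |F x| ≤ C := by
    intro x
    have h1 := mcd_osc_total F a hbd x x₀
    have h2 := abs_sub_abs_le_abs_sub (F x) (F x₀)
    rw [hCdef]
    linarith
  have hFint : Integrable F μpi := by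
    refine (integrable_const C).mono' hF.aestronglyMeasurable ?_
    exact Filter.Eventually.of_forall fun x => by rw [Real.norm_eq_abs]; exact hFbd x
  set F' : (Fin N → Ω) → ℝ := fun x => F x - m with hF'
  have hF'meas : Measurable F' := hF.sub_const m
  have hF'bd : ∀ (x : Fin N → Ω) (j : Fin N) (x' : Ω),
      |F' x - F' (Function.update x j x')| ≤ a j := by
    intro x j x'
    have := hbd x j x'
    simpa [hF'] using this
  have hF'int : ∫ x, F' x ∂μpi = 0 := by
    rw [hF']
    rw [integral_sub ?hint (integrable_const m)]
    · simp [← hm]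
    case hint => exact hFint
  -- mgf bound for Y := F' ∘ Xvec
  set Y : ω → ℝ := fun w => F' (fun j => X j w) with hY
  have hYmeas : Measurable Y := hF'meas.comp hXvec
  have hmgf : ∀ t : ℝ, ∫ w, Real.exp (t * Y w) ∂P ≤ Real.exp (t ^ 2 * S / 8) := by
    intro t
    have h1 : ∫ w, Real.exp (t * Y w) ∂P = ∫ x, Real.exp (t * F' x) ∂μpi := by
      rw [← hmap]
      exact (integral_map hXvec.aemeasurable
        ((hF'meas.const_mul t).exp.aestronglyMeasurable)).symm
    rw [h1]
    calc ∫ x, Real.exp (t * F' x) ∂μpi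
        ≤ Real.exp (t * ∫ x, F' x ∂μpi + t ^ 2 * S / 8) :=
          mcd_mgf_pi N _ F' hF'meas a ha hF'bd t
      _ = Real.exp (t ^ 2 * S / 8) := by rw [hF'int]; ring_nf
  -- Chernoff with t = 4ε/S
  set t : ℝ := 4 * ε / S with ht
  have htpos : 0 < t := by positivity
  have hexp_t : -t * ε + t ^ 2 * S / 8 = -2 * ε ^ 2 / S := by
    rw [ht]; field_simp; ring
  have hint_exp : ∀ c : ℝ, Integrable (fun w => Real.exp (c * Y w)) P := by
    intro c
    refine (integrable_const (Real.exp (|c| * (C + |m|)))).mono'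
      ((hYmeas.const_mul c).exp.aestronglyMeasurable) ?_
    refine Filter.Eventually.of_forall fun w => ?_
    rw [Real.norm_eq_abs, abs_of_pos (Real.exp_pos _), Real.exp_le_exp]
    have hYbd : |Y w| ≤ C + |m| := by
      rw [hY, hF']
      calc |F (fun j => X j w) - m| ≤ |F (fun j => X j w)| + |m| := abs_sub _ _
        _ ≤ C + |m| := add_le_add_left (hFbd _) _
    calc c * Y w ≤ |c * Y w| := le_abs_self _
      _ = |c| * |Y w| := abs_mul _ _
      _ ≤ |c| * (C + |m|) := mul_le_mul_of_nonneg_left hYbd (abs_nonneg c)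
  have h1 : (P {w | ε ≤ Y w}).toReal ≤ Real.exp (-2 * ε ^ 2 / S) := by
    calc (P {w | ε ≤ Y w}).toReal
        ≤ Real.exp (-t * ε) * mgf Y P t :=
          measure_ge_le_exp_mul_mgf ε htpos.le (hint_exp t)
      _ ≤ Real.exp (-t * ε) * Real.exp (t ^ 2 * S / 8) :=
          mul_le_mul_of_nonneg_left (hmgf t) (Real.exp_pos _).le
      _ = Real.exp (-2 * ε ^ 2 / S) := by rw [← Real.exp_add, hexp_t]
  have h2 : (P {w | ε ≤ -Y w}).toReal ≤ Real.exp (-2 * ε ^ 2 / S) := by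
    have hmgfneg : mgf (-Y) P t ≤ Real.exp (t ^ 2 * S / 8) := by
      have : mgf (-Y) P t = ∫ w, Real.exp ((-t) * Y w) ∂P := by
        rw [mgf]
        congr 1
        funext w
        simp [mul_comm]
      rw [this]
      have := hmgf (-t)
      calc ∫ w, Real.exp ((-t) * Y w) ∂P ≤ Real.exp ((-t) ^ 2 * S / 8) := hmgf (-t)
        _ = Real.exp (t ^ 2 * S / 8) := by ring_nf
    calc (P {w | ε ≤ -Y w}).toReal
        ≤ Real.exp (-t * ε) * mgf (-Y) P t := by
          have := measure_ge_le_exp_mul_mgf (X := fun w => -Y w) (μ := P) ε htpos.le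
            (by simpa using hint_exp (-t))
          simpa [measureReal_def, Pi.neg_def] using this
      _ ≤ Real.exp (-t * ε) * Real.exp (t ^ 2 * S / 8) :=
          mul_le_mul_of_nonneg_left hmgfneg (Real.exp_pos _).le
      _ = Real.exp (-2 * ε ^ 2 / S) := by rw [← Real.exp_add, hexp_t]
  -- union bound
  have hsub : {w | ε ≤ |F (fun j => X j w) - ∫ w', F (fun j => X j w') ∂P|}
      ⊆ {w | ε ≤ Y w} ∪ {w | ε ≤ -Y w} := by
    intro w hw
    simp only [Set.mem_setOf_eq, hEm] at hw
    rcases abs_cases (F (fun j => X j w) - m) with ⟨habs, _⟩ | ⟨habs, _⟩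
    · left; show ε ≤ Y w; rw [hY, hF']; simpa [habs] using hw
    · right; show ε ≤ -Y w; rw [hY, hF']; simp only [habs] at hw; simpa using hw
  calc (P {w | ε ≤ |F (fun j => X j w) - ∫ w', F (fun j => X j w') ∂P|}).toReal
      ≤ (P ({w | ε ≤ Y w} ∪ {w | ε ≤ -Y w})).toReal := by
        apply ENNReal.toReal_mono (measure_ne_top _ _)
        exact measure_mono hsub
    _ ≤ ((P {w | ε ≤ Y w}) + (P {w | ε ≤ -Y w})).toReal := by
        apply ENNReal.toReal_mono
        · exact ENNReal.add_ne_top.2 ⟨measure_ne_top _ _, measure_ne_top _ _⟩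
        · exact measure_union_le _ _
    _ = (P {w | ε ≤ Y w}).toReal + (P {w | ε ≤ -Y w}).toReal :=
        ENNReal.toReal_add (measure_ne_top _ _) (measure_ne_top _ _)
    _ ≤ Real.exp (-2 * ε ^ 2 / S) + Real.exp (-2 * ε ^ 2 / S) := add_le_add h1 h2
    _ = 2 * Real.exp (-2 * ε ^ 2 / S) := by ring
end

section
/- Under the scaled-kernel assumptions, there exist ρ₀ ∈ (0,1) and C > 0, depending only on d and φ, such that the following holds for every ρ ∈ (0, ρ₀), every N ≥ 1, every choice of points x_1, ..., x_N ∈ S^d, and every M > 0: if ε_1, ..., ε_N are independent real random variables with E[ε_j] = 0 and |ε_j| ≤ M almost surely for each j, then E[ ‖ (1/N) Σ_{j=1}^N ε_j φ_ρ(·, x_j) ‖_{L²(ν)} ] ≤ C ρ^{-d/2} N^{-1/2} M. -/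
open MeasureTheory ProbabilityTheory

open scoped ENNReal NNReal

/-- The uniform probability measure `ν = μ/ω_d` on the unit sphere `S^d ⊆ ℝ^(d+1)`, where
`μ` is the `d`-dimensional Hausdorff measure restricted to the sphere and `ω_d = μ(S^d)`. -/
noncomputable def uniformSphereMeasure (d : ℕ) : Measure (EuclideanSpace ℝ (Fin (d + 1))) :=
  (μH[(d : ℝ)] (Metric.sphere (0 : EuclideanSpace ℝ (Fin (d + 1))) 1))⁻¹ •
    (μH[(d : ℝ)]).restrict (Metric.sphere (0 : EuclideanSpace ℝ (Fin (d + 1))) 1)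

section Aux
variable {d : ℕ}

lemma sphere_measurable :
    MeasurableSet (Metric.sphere (0 : EuclideanSpace ℝ (Fin (d + 1))) 1) :=
  Metric.isClosed_sphere.measurableSet

lemma usm_zero_of_zero (h : μH[(d : ℝ)] (Metric.sphere (0 : EuclideanSpace ℝ (Fin (d + 1))) 1) = 0) :
    uniformSphereMeasure d = 0 := by
  rw [uniformSphereMeasure, Measure.restrict_eq_zero.mpr h, smul_zero]

lemma usm_zero_of_top (h : μH[(d : ℝ)] (Metric.sphere (0 : EuclideanSpace ℝ (Fin (d + 1))) 1) = ⊤) :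
    uniformSphereMeasure d = 0 := by
  rw [uniformSphereMeasure, h, ENNReal.inv_top, zero_smul]

lemma usm_prob (h0 : μH[(d : ℝ)] (Metric.sphere (0 : EuclideanSpace ℝ (Fin (d + 1))) 1) ≠ 0)
    (ht : μH[(d : ℝ)] (Metric.sphere (0 : EuclideanSpace ℝ (Fin (d + 1))) 1) ≠ ⊤) :
    IsProbabilityMeasure (uniformSphereMeasure d) := by
  constructor
  rw [uniformSphereMeasure, Measure.smul_apply, Measure.restrict_apply MeasurableSet.univ,
    Set.univ_inter, smul_eq_mul, ENNReal.inv_mul_cancel h0 ht]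

lemma usm_ae_mem :
    ∀ᵐ z ∂(uniformSphereMeasure d), z ∈ Metric.sphere (0 : EuclideanSpace ℝ (Fin (d + 1))) 1 :=
  Measure.ae_smul_measure (ae_restrict_mem sphere_measurable) _

/-- bounded continuous functions are integrable against a finite measure -/
lemma integrable_of_bdd {α : Type*} [MeasurableSpace α] [TopologicalSpace α] [OpensMeasurableSpace α]
    {ν : Measure α} [IsFiniteMeasure ν] {f : α → ℝ} (hf : Continuous f) {B : ℝ}
    (hB : ∀ x, |f x| ≤ B) : Integrable f ν :=
  (integrable_const B).mono' hf.aestronglyMeasurable (Filter.Eventually.of_forall (by simpa using hB))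

/-- invariance of the uniform measure under a linear isometry preserving the sphere -/
lemma usm_map (f : EuclideanSpace ℝ (Fin (d + 1)) ≃ₗᵢ[ℝ] EuclideanSpace ℝ (Fin (d + 1))) :
    (uniformSphereMeasure d).map f = uniformSphereMeasure d := by
  have hpre : ∀ s : Set (EuclideanSpace ℝ (Fin (d + 1))), μH[(d : ℝ)] (⇑f ⁻¹' s) = μH[(d : ℝ)] s := by
    intro s
    rw [f.isometry.hausdorffMeasure_preimage (Or.inr f.surjective)]
    congr 1
    rw [f.surjective.range_eq, Set.inter_univ]
  have hS : (⇑f ⁻¹' (Metric.sphere (0 : EuclideanSpace ℝ (Fin (d + 1))) 1))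
      = Metric.sphere (0 : EuclideanSpace ℝ (Fin (d + 1))) 1 := by
    ext z
    simp [mem_sphere_zero_iff_norm, f.norm_map]
  have hrestrict : ((μH[(d : ℝ)]).restrict
      (Metric.sphere (0 : EuclideanSpace ℝ (Fin (d + 1))) 1)).map f
      = (μH[(d : ℝ)]).restrict (Metric.sphere (0 : EuclideanSpace ℝ (Fin (d + 1))) 1) := by
    ext s hs
    rw [Measure.map_apply f.continuous.measurable hs,
      Measure.restrict_apply (hs.preimage f.continuous.measurable), Measure.restrict_apply hs]
    have : ⇑f ⁻¹' s ∩ Metric.sphere (0 : EuclideanSpace ℝ (Fin (d + 1))) 1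
        = ⇑f ⁻¹' (s ∩ Metric.sphere (0 : EuclideanSpace ℝ (Fin (d + 1))) 1) := by
      rw [Set.preimage_inter, hS]
    rw [this, hpre]
  rw [uniformSphereMeasure, Measure.map_smul, hrestrict]

end Aux

section Lambda
variable {d : ℕ} (φ : ℝ → ℝ) (ρ : ℝ)

/-- rotational invariance of `Λ` -/
lemma lambda_invariant (hφ : Continuous φ) {x y : EuclideanSpace ℝ (Fin (d + 1))}
    (hx : x ∈ Metric.sphere (0 : EuclideanSpace ℝ (Fin (d + 1))) 1)
    (hy : y ∈ Metric.sphere (0 : EuclideanSpace ℝ (Fin (d + 1))) 1) :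
    ∫ z, φ (‖x - z‖ / ρ) ∂(uniformSphereMeasure d)
      = ∫ z, φ (‖y - z‖ / ρ) ∂(uniformSphereMeasure d) := by
  rw [mem_sphere_zero_iff_norm] at hx hy
  set f := (Submodule.reflection (ℝ ∙ (y - x))ᗮ : EuclideanSpace ℝ (Fin (d + 1)) ≃ₗᵢ[ℝ]
    EuclideanSpace ℝ (Fin (d + 1))) with hf
  have hfy : f y = x := Submodule.reflection_sub (hy.trans hx.symm)
  have hmap := usm_map f
  have hcont : Continuous fun z => φ (‖x - z‖ / ρ) :=
    hφ.comp ((continuous_const.sub continuous_id).norm.div_const ρ)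
  calc ∫ z, φ (‖x - z‖ / ρ) ∂(uniformSphereMeasure d)
      = ∫ z, φ (‖x - z‖ / ρ) ∂((uniformSphereMeasure d).map f) := by rw [hmap]
    _ = ∫ z, φ (‖x - f z‖ / ρ) ∂(uniformSphereMeasure d) := by
        rw [integral_map f.continuous.measurable.aemeasurable hcont.aestronglyMeasurable]
    _ = ∫ z, φ (‖y - z‖ / ρ) ∂(uniformSphereMeasure d) := by
        congr 1; ext z
        rw [← hfy, ← f.map_sub, f.norm_map]

end Lambda

section Geom
variable {d : ℕ}

lemma coord_le_norm {n : ℕ} (z : EuclideanSpace ℝ (Fin n)) (i : Fin n) : |z i| ≤ ‖z‖ := by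
  rw [EuclideanSpace.norm_eq, ← Real.sqrt_sq_eq_abs]
  apply Real.sqrt_le_sqrt
  have := Finset.single_le_sum (f := fun j => ‖z j‖ ^ 2)
    (fun j _ => sq_nonneg _) (Finset.mem_univ i)
  simpa [Real.norm_eq_abs, sq_abs] using this

lemma proj_lipschitz {n : ℕ} :
    LipschitzWith 1 (fun (z : EuclideanSpace ℝ (Fin (n+1))) (i : Fin n) => z i.succ) := by
  apply LipschitzWith.of_dist_le_mul
  intro z z'
  simp only [NNReal.coe_one, one_mul]
  rw [dist_pi_le_iff dist_nonneg]
  intro i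
  rw [Real.dist_eq, dist_eq_norm]
  have : z i.succ - z' i.succ = (z - z') i.succ := by simp
  rw [this]
  exact coord_le_norm _ _

lemma g_facts {t : ℝ} (h0 : 0 ≤ t) (h1 : t ≤ 1) :
    0 ≤ t * Real.sqrt (1 - t^2/4) ∧ t * Real.sqrt (1 - t^2/4) ≤ t ∧
      (t * Real.sqrt (1 - t^2/4))^2 = t^2 - t^4/4 := by
  have hnn : (0:ℝ) ≤ 1 - t^2/4 := by nlinarith
  have hsq : Real.sqrt (1 - t^2/4) ^ 2 = 1 - t^2/4 := Real.sq_sqrt hnn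
  have hle : Real.sqrt (1 - t^2/4) ≤ 1 := Real.sqrt_le_one.mpr (by nlinarith)
  refine ⟨mul_nonneg h0 (Real.sqrt_nonneg _), ?_, ?_⟩
  · nlinarith [Real.sqrt_nonneg (1 - t^2/4)]
  · rw [mul_pow, hsq]; ring

lemma g_gap {t1 t2 : ℝ} (h0 : 0 ≤ t1) (h12 : t1 ≤ t2) (h1 : t2 ≤ 1) :
    (t2 - t1)/4 ≤ t2 * Real.sqrt (1 - t2^2/4) - t1 * Real.sqrt (1 - t1^2/4) := by
  obtain ⟨ha0, ha1, ha2⟩ := g_facts h0 (h12.trans h1)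
  obtain ⟨hb0, hb1, hb2⟩ := g_facts (h0.trans h12) h1
  set a := t1 * Real.sqrt (1 - t1^2/4) with hadef
  set b := t2 * Real.sqrt (1 - t2^2/4) with hbdef
  have hab : (b - a) * (b + a) = (t2^2 - t1^2) - (t2^4 - t1^4)/4 := by
    have : (b - a) * (b + a) = b^2 - a^2 := by ring
    rw [this, ha2, hb2]; ring
  have h2 : (t2^2 - t1^2)/2 ≤ (t2^2 - t1^2) - (t2^4 - t1^4)/4 := by
    have hu : (0:ℝ) ≤ t2^2 - t1^2 := by nlinarith
    have hs : t1^2 + t2^2 ≤ 2 := by nlinarith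
    nlinarith [mul_le_mul_of_nonneg_left hs hu]
  rcases eq_or_lt_of_le (by linarith : (0:ℝ) ≤ a + b) with hz | hpos
  · have haz : a = 0 := by linarith
    have hbz : b = 0 := by linarith
    have hq : t2^2 - t2^4/4 = 0 := by rw [← hb2, hbz]; ring
    have ht2 : t2 ≤ 0 := by
      by_contra hc
      push_neg at hc
      have h1' : t2^2 ≤ 1 := by nlinarith
      have h2' : t2^2 * t2^2 ≤ t2^2 * 1 := mul_le_mul_of_nonneg_left h1' (sq_nonneg t2)
      nlinarith [mul_pos hc hc]
    have ht2' : t2 = 0 := le_antisymm ht2 (h0.trans h12)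
    have ht1 : t1 = 0 := le_antisymm (by linarith) h0
    simp [haz, hbz, ht1, ht2']
  · have hle2 : (t2 - t1) * (a + b) ≤ (t2 - t1) * (t1 + t2) :=
      mul_le_mul_of_nonneg_left (by linarith) (sub_nonneg.2 h12)
    nlinarith [hab, h2, hpos, hle2]

end Geom

set_option maxHeartbeats 1000000 in
lemma annulus_lower (d : ℕ) (hd : 1 ≤ d) {t1 t2 : ℝ} (h0 : 0 ≤ t1) (h12 : t1 < t2) (h1 : t2 ≤ 1) :
    ENNReal.ofReal (((t2 - t1) / (4 * Real.sqrt d)) ^ d) ≤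
      μH[(d : ℝ)] {z : EuclideanSpace ℝ (Fin (d + 1)) |
        ‖z‖ = 1 ∧ ‖EuclideanSpace.single (0 : Fin (d + 1)) (1 : ℝ) - z‖ ∈ Set.Icc t1 t2} := by
  set A := {z : EuclideanSpace ℝ (Fin (d + 1)) |
    ‖z‖ = 1 ∧ ‖EuclideanSpace.single (0 : Fin (d + 1)) (1 : ℝ) - z‖ ∈ Set.Icc t1 t2} with hA
  set π := fun (z : EuclideanSpace ℝ (Fin (d + 1))) (i : Fin d) => z i.succ with hπ
  obtain ⟨hs10, hs11, hs1sq⟩ := g_facts h0 (h12.le.trans h1)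
  obtain ⟨hs20, hs21, hs2sq⟩ := g_facts (h0.trans h12.le) h1
  set s1 := t1 * Real.sqrt (1 - t1 ^ 2 / 4) with hs1def
  set s2 := t2 * Real.sqrt (1 - t2 ^ 2 / 4) with hs2def
  have hgap := g_gap h0 h12.le h1
  have hdpos : (0:ℝ) < d := by exact_mod_cast Nat.lt_of_lt_of_le Nat.zero_lt_one hd
  have hsd1 : (1:ℝ) ≤ Real.sqrt d := by
    rw [show (1:ℝ) = Real.sqrt 1 by simp]
    exact Real.sqrt_le_sqrt (by exact_mod_cast hd)
  have hsd0 : (0:ℝ) < Real.sqrt d := lt_of_lt_of_le one_pos hsd1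
  set r := (t2 - t1) / (8 * Real.sqrt d) with hrdef
  have hr0 : 0 < r := div_pos (by linarith) (by positivity)
  set m := (s1 + s2) / 2 with hmdef
  have hm0 : 0 ≤ m := by simp only [hmdef]; linarith
  set w0 : Fin d → ℝ := fun _ => m / Real.sqrt d with hw0def
  -- the ball is contained in the image of the annulus
  have hsub : Metric.ball w0 r ⊆ π '' A := by
    intro w hw
    rw [Metric.mem_ball] at hw
    have hsumnn : (0:ℝ) ≤ ∑ i, (w i) ^ 2 := Finset.sum_nonneg fun i _ => sq_nonneg _
    set s := Real.sqrt (∑ i, (w i) ^ 2) with hsdef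
    have hs0 : 0 ≤ s := Real.sqrt_nonneg _
    have hssq : s ^ 2 = ∑ i, (w i) ^ 2 := Real.sq_sqrt hsumnn
    -- |s - m| ≤ √d * r
    have habs : |s - m| ≤ Real.sqrt d * r := by
      set W := (WithLp.equiv 2 (Fin d → ℝ)).symm w with hW
      set W0 := (WithLp.equiv 2 (Fin d → ℝ)).symm w0 with hW0
      have hWn : ‖W‖ = s := by
        rw [EuclideanSpace.norm_eq, hsdef]
        congr 1
        refine Finset.sum_congr rfl fun i _ => ?_
        simp [hW, Real.norm_eq_abs, sq_abs]
      have hW0n : ‖W0‖ = m := by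
        rw [EuclideanSpace.norm_eq]
        have : ∀ i : Fin d, ‖W0 i‖ ^ 2 = m ^ 2 / d := by
          intro i
          simp only [hW0, WithLp.equiv_symm_apply, WithLp.ofLp_toLp, hw0def, Real.norm_eq_abs, sq_abs]
          rw [div_pow, Real.sq_sqrt hdpos.le]
        rw [Finset.sum_congr rfl fun i _ => this i, Finset.sum_const, Finset.card_univ,
          Fintype.card_fin, nsmul_eq_mul]
        rw [mul_div_cancel₀ _ (ne_of_gt hdpos)]
        exact Real.sqrt_sq hm0
      have htri : |‖W‖ - ‖W0‖| ≤ ‖W - W0‖ := abs_norm_sub_norm_le _ _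
      have hWW0 : ‖W - W0‖ ≤ Real.sqrt d * r := by
        rw [EuclideanSpace.norm_eq]
        have hbd : ∀ i : Fin d, ‖(W - W0) i‖ ^ 2 ≤ r ^ 2 := by
          intro i
          have h1' : dist (w i) (w0 i) ≤ dist w w0 := dist_le_pi_dist w w0 i
          have h2' : |w i - w0 i| ≤ r := by
            rw [Real.dist_eq] at h1'
            exact h1'.trans hw.le
          have : (W - W0) i = w i - w0 i := by simp [hW, hW0]
          rw [this, Real.norm_eq_abs]
          exact pow_le_pow_left₀ (abs_nonneg _) h2' 2
        calc Real.sqrt (∑ i, ‖(W - W0) i‖ ^ 2) ≤ Real.sqrt (∑ _i : Fin d, r ^ 2) :=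
              Real.sqrt_le_sqrt (Finset.sum_le_sum fun i _ => hbd i)
          _ = Real.sqrt (d * r ^ 2) := by
              rw [Finset.sum_const, Finset.card_univ, Fintype.card_fin, nsmul_eq_mul]
          _ = Real.sqrt d * r := by
              rw [Real.sqrt_mul hdpos.le, Real.sqrt_sq hr0.le]
      calc |s - m| = |‖W‖ - ‖W0‖| := by rw [hWn, hW0n]
        _ ≤ ‖W - W0‖ := htri
        _ ≤ Real.sqrt d * r := hWW0
    have hsdr : Real.sqrt d * r = (t2 - t1) / 8 := by
      rw [hrdef]; field_simp
    rw [hsdr] at habs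
    have habs' := abs_le.1 habs
    have hs1s : s1 ≤ s := by simp only [hmdef] at habs'; linarith
    have hss2 : s ≤ s2 := by simp only [hmdef] at habs'; linarith
    have hs_le1 : s ≤ 1 := hss2.trans (hs21.trans h1)
    have hq_nn : (0:ℝ) ≤ 1 - s ^ 2 := by nlinarith
    set q := Real.sqrt (1 - s ^ 2) with hqdef
    have hq0 : 0 ≤ q := Real.sqrt_nonneg _
    have hqsq : q ^ 2 = 1 - s ^ 2 := Real.sq_sqrt hq_nn
    set zf : Fin (d + 1) → ℝ := Fin.cons q w with hzf
    set z := (WithLp.equiv 2 (Fin (d + 1) → ℝ)).symm zf with hz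
    have hzapp : ∀ i : Fin (d + 1), z i = zf i := fun i => rfl
    have hzn : ‖z‖ = 1 := by
      rw [EuclideanSpace.norm_eq]
      have : ∑ i : Fin (d + 1), ‖z i‖ ^ 2 = q ^ 2 + ∑ i : Fin d, (w i) ^ 2 := by
        rw [Fin.sum_univ_succ]
        congr 1
        · rw [hzapp, hzf, Fin.cons_zero, Real.norm_eq_abs, sq_abs]
        · refine Finset.sum_congr rfl fun i _ => ?_
          rw [hzapp, hzf, Fin.cons_succ, Real.norm_eq_abs, sq_abs]
      rw [this, ← hssq, hqsq]
      norm_num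
    have hchord : ‖EuclideanSpace.single (0 : Fin (d + 1)) (1 : ℝ) - z‖
        = Real.sqrt (2 - 2 * q) := by
      rw [EuclideanSpace.norm_eq]
      have : ∑ i : Fin (d + 1), ‖(EuclideanSpace.single (0 : Fin (d + 1)) (1 : ℝ) - z) i‖ ^ 2
          = (1 - q) ^ 2 + ∑ i : Fin d, (w i) ^ 2 := by
        rw [Fin.sum_univ_succ]
        congr 1
        · have : (EuclideanSpace.single (0 : Fin (d + 1)) (1 : ℝ) - z) 0 = 1 - q := by
            simp [hzapp, hzf, EuclideanSpace.single_apply]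
          rw [this, Real.norm_eq_abs, sq_abs]
        · refine Finset.sum_congr rfl fun i _ => ?_
          have : (EuclideanSpace.single (0 : Fin (d + 1)) (1 : ℝ) - z) i.succ = -(w i) := by
            simp [hzapp, hzf, EuclideanSpace.single_apply, Fin.succ_ne_zero]
          rw [this, Real.norm_eq_abs, sq_abs, neg_pow]
          ring
      rw [this, ← hssq]
      congr 1
      linear_combination hqsq
    have hmem : z ∈ A := by
      refine ⟨hzn, ?_, ?_⟩
      · -- t1 ≤ chord
        rw [hchord]
        apply Real.le_sqrt_of_sq_le
        have hq_ub : q ≤ 1 - t1 ^ 2 / 2 := by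
          have h1s : 1 - s ^ 2 ≤ (1 - t1 ^ 2 / 2) ^ 2 := by nlinarith
          calc q ≤ Real.sqrt ((1 - t1 ^ 2 / 2) ^ 2) := Real.sqrt_le_sqrt h1s
            _ = 1 - t1 ^ 2 / 2 := Real.sqrt_sq (by nlinarith)
        nlinarith
      · -- chord ≤ t2
        rw [hchord]
        have hq_lb : 1 - t2 ^ 2 / 2 ≤ q := by
          have h1s : (1 - t2 ^ 2 / 2) ^ 2 ≤ 1 - s ^ 2 := by nlinarith
          calc (1 - t2 ^ 2 / 2) = Real.sqrt ((1 - t2 ^ 2 / 2) ^ 2) :=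
                (Real.sqrt_sq (by nlinarith)).symm
            _ ≤ q := Real.sqrt_le_sqrt h1s
        calc Real.sqrt (2 - 2 * q) ≤ Real.sqrt (t2 ^ 2) := Real.sqrt_le_sqrt (by nlinarith)
          _ = t2 := Real.sqrt_sq (h0.trans h12.le)
    exact ⟨z, hmem, funext fun i => by simp [hπ, hzapp, hzf, Fin.cons_succ]⟩
  -- measure chain
  have hlip : LipschitzWith 1 π := proj_lipschitz
  have himg : μH[(d : ℝ)] (π '' A) ≤ μH[(d : ℝ)] A := by
    have := hlip.hausdorffMeasure_image_le (by positivity : (0:ℝ) ≤ (d:ℝ)) A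
    simpa using this
  have hvol : (μH[(d : ℝ)] : Measure (Fin d → ℝ)) = volume := by
    have := hausdorffMeasure_pi_real (ι := Fin d)
    rwa [Fintype.card_fin] at this
  calc ENNReal.ofReal (((t2 - t1) / (4 * Real.sqrt d)) ^ d)
      = volume (Metric.ball w0 r) := by
        rw [Real.volume_pi_ball w0 hr0, Fintype.card_fin]
        congr 2
        rw [hrdef]; field_simp; ring
    _ ≤ volume (π '' A) := measure_mono hsub
    _ = μH[(d : ℝ)] (π '' A) := by rw [hvol]
    _ ≤ μH[(d : ℝ)] A := himg

section LambdaLower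
variable {d : ℕ}

lemma north_mem_sphere :
    EuclideanSpace.single (0 : Fin (d + 1)) (1 : ℝ)
      ∈ Metric.sphere (0 : EuclideanSpace ℝ (Fin (d + 1))) 1 := by
  rw [mem_sphere_zero_iff_norm, EuclideanSpace.norm_single, norm_one]

lemma lambda_lower_bound (hd : 1 ≤ d) (φ : ℝ → ℝ) (hφ_cont : Continuous φ)
    (hφ_nonneg : ∀ z, 0 ≤ z → 0 ≤ φ z) (hφ_bdd : ∃ B : ℝ, ∀ z, 0 ≤ z → φ z ≤ B)
    (hφ_ne : ∃ z, 0 ≤ z ∧ φ z ≠ 0)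
    (h0 : μH[(d : ℝ)] (Metric.sphere (0 : EuclideanSpace ℝ (Fin (d + 1))) 1) ≠ 0)
    (ht : μH[(d : ℝ)] (Metric.sphere (0 : EuclideanSpace ℝ (Fin (d + 1))) 1) ≠ ⊤) :
    ∃ ρ₀ ∈ Set.Ioo (0:ℝ) 1, ∃ c > (0:ℝ), ∀ ρ ∈ Set.Ioo (0:ℝ) ρ₀,
      ∀ x ∈ Metric.sphere (0 : EuclideanSpace ℝ (Fin (d + 1))) 1,
        c * ρ ^ d ≤ ∫ z, φ (‖x - z‖ / ρ) ∂(uniformSphereMeasure d) := by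
  haveI : IsProbabilityMeasure (uniformSphereMeasure d) := usm_prob h0 ht
  obtain ⟨B, hB⟩ := hφ_bdd
  obtain ⟨z0, hz00, hz0ne⟩ := hφ_ne
  have hφz0 : 0 < φ z0 := lt_of_le_of_ne (hφ_nonneg z0 hz00) (Ne.symm hz0ne)
  set a := φ z0 / 2 with hadef
  have ha : 0 < a := half_pos hφz0
  obtain ⟨δ, hδ0, hδ⟩ := Metric.continuous_iff.mp hφ_cont z0 (φ z0 / 2) (half_pos hφz0)
  obtain ⟨u, v, hu0, huv, hφint⟩ :
      ∃ u v : ℝ, 0 ≤ u ∧ u < v ∧ ∀ t, u ≤ t → t ≤ v → a ≤ φ t := by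
    refine ⟨z0, z0 + δ/2, hz00, by linarith, ?_⟩
    intro t htu htv
    have hdist : dist t z0 < δ := by
      rw [Real.dist_eq, abs_lt]
      exact ⟨by linarith, by linarith⟩
    have h' := hδ t hdist
    rw [Real.dist_eq, abs_lt] at h'
    simp only [hadef]
    linarith [h'.1]
  have hv0 : 0 < v := lt_of_le_of_lt hu0 huv
  set ω := (μH[(d : ℝ)] (Metric.sphere (0 : EuclideanSpace ℝ (Fin (d + 1))) 1)).toReal with hω
  have hωpos : 0 < ω := ENNReal.toReal_pos h0 ht
  have hsd0 : (0:ℝ) < Real.sqrt d := Real.sqrt_pos.mpr (by exact_mod_cast Nat.lt_of_lt_of_le Nat.zero_lt_one hd)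
  set ρ₀ := min (1/(2*v)) (1/2) with hρ₀def
  have hρ₀pos : 0 < ρ₀ := lt_min (by positivity) (by norm_num)
  have hρ₀lt1 : ρ₀ < 1 := lt_of_le_of_lt (min_le_right _ _) (by norm_num)
  set c := a * ((v - u)/(4 * Real.sqrt d))^d / ω with hcdef
  have hc : 0 < c := by
    apply div_pos _ hωpos
    apply mul_pos ha
    apply pow_pos
    apply div_pos (by linarith) (by positivity)
  refine ⟨ρ₀, ⟨hρ₀pos, hρ₀lt1⟩, c, hc, ?_⟩
  rintro ρ ⟨hρ0, hρ1⟩ x hx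
  rw [lambda_invariant φ ρ hφ_cont hx north_mem_sphere]
  set A := {z : EuclideanSpace ℝ (Fin (d + 1)) |
    ‖z‖ = 1 ∧ ‖EuclideanSpace.single (0 : Fin (d + 1)) (1 : ℝ) - z‖ ∈ Set.Icc (u*ρ) (v*ρ)} with hA
  have hAmeas : MeasurableSet A := by
    apply IsClosed.measurableSet
    apply IsClosed.inter
    · exact isClosed_eq continuous_norm continuous_const
    · exact IsClosed.preimage ((continuous_const.sub continuous_id).norm) isClosed_Icc
  have hAsub : A ⊆ Metric.sphere (0 : EuclideanSpace ℝ (Fin (d + 1))) 1 := by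
    intro z hz
    rw [mem_sphere_zero_iff_norm]
    exact hz.1
  have hvρ : v * ρ ≤ 1 := by
    have h1' : ρ < 1/(2*v) := lt_of_lt_of_le hρ1 (min_le_left _ _)
    have h2' : (2*v) * ρ < (2*v) * (1/(2*v)) :=
      mul_lt_mul_of_pos_left h1' (by linarith)
    rw [mul_one_div_cancel (by positivity : (2*v) ≠ 0)] at h2'
    nlinarith [mul_nonneg hv0.le hρ0.le]
  -- lower bound for μH A
  have hmea := annulus_lower d hd (t1 := u*ρ) (t2 := v*ρ)
    (mul_nonneg hu0 hρ0.le) (by nlinarith) hvρ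
  have hAle : μH[(d : ℝ)] A ≤ μH[(d : ℝ)] (Metric.sphere (0 : EuclideanSpace ℝ (Fin (d + 1))) 1) :=
    measure_mono hAsub
  have hAfin : μH[(d : ℝ)] A ≠ ⊤ := (lt_of_le_of_lt hAle (lt_top_iff_ne_top.mpr ht)).ne
  have hAreal : ((v - u)/(4 * Real.sqrt d))^d * ρ^d ≤ (μH[(d : ℝ)] A).toReal := by
    rw [← mul_pow]
    have heq : (v - u)/(4 * Real.sqrt d) * ρ = (v*ρ - u*ρ)/(4 * Real.sqrt d) := by ring
    rw [heq]
    exact (ENNReal.ofReal_le_iff_le_toReal hAfin).mp hmea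
  -- ν A
  have hνA : (uniformSphereMeasure d A).toReal = (μH[(d : ℝ)] A).toReal / ω := by
    rw [uniformSphereMeasure, Measure.smul_apply, Measure.restrict_apply hAmeas,
      Set.inter_eq_self_of_subset_left hAsub, smul_eq_mul, ENNReal.toReal_mul,
      ENNReal.toReal_inv, hω, div_eq_inv_mul]
  -- integral lower bound via the indicator
  have hind : ∀ z : EuclideanSpace ℝ (Fin (d + 1)),
      Set.indicator A (fun _ => a) z ≤ φ (‖EuclideanSpace.single (0 : Fin (d+1)) (1:ℝ) - z‖ / ρ) := by
    intro z
    by_cases hz : z ∈ A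
    · rw [Set.indicator_of_mem hz]
      obtain ⟨h1', h2'⟩ := hz.2
      apply hφint
      · rw [le_div_iff₀ hρ0]; linarith
      · rw [div_le_iff₀ hρ0]; linarith
    · rw [Set.indicator_of_notMem hz]
      exact hφ_nonneg _ (by positivity)
  have hint1 : Integrable (Set.indicator A (fun _ => a)) (uniformSphereMeasure d) :=
    (integrable_const a).indicator hAmeas
  have hcont2 : Continuous (fun z : EuclideanSpace ℝ (Fin (d+1)) =>
      φ (‖EuclideanSpace.single (0 : Fin (d+1)) (1:ℝ) - z‖ / ρ)) :=
    hφ_cont.comp ((continuous_const.sub continuous_id).norm.div_const ρ)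
  have hint2 : Integrable (fun z => φ (‖EuclideanSpace.single (0 : Fin (d+1)) (1:ℝ) - z‖ / ρ))
      (uniformSphereMeasure d) := by
    apply integrable_of_bdd hcont2 (B := max B 0)
    intro z
    rw [abs_of_nonneg (hφ_nonneg _ (by positivity))]
    exact le_max_of_le_left (hB _ (by positivity))
  have hmono := integral_mono hint1 hint2 hind
  rw [integral_indicator_const _ hAmeas] at hmono
  have hkey : c * ρ^d ≤ (uniformSphereMeasure d A).toReal * a := by
    rw [hνA, hcdef]
    have hrw : (μH[(d : ℝ)] A).toReal / ω * a = a * (μH[(d : ℝ)] A).toReal / ω := by ring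
    have hlw : a * ((v - u)/(4 * Real.sqrt d))^d / ω * ρ^d
        = a * (((v - u)/(4 * Real.sqrt d))^d * ρ^d) / ω := by ring
    rw [hrw, hlw, div_eq_mul_inv, div_eq_mul_inv]
    exact mul_le_mul_of_nonneg_right (mul_le_mul_of_nonneg_left hAreal ha.le)
      (inv_nonneg.mpr hωpos.le)
  calc c * ρ^d ≤ (uniformSphereMeasure d A).toReal * a := hkey
    _ = (uniformSphereMeasure d A).toReal • a := by rw [smul_eq_mul]
    _ ≤ _ := hmono

end LambdaLower
/-- The `ν`-normalized scaled zonal kernel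
`φ_ρ(x, y) = Λ_{φ,ρ}⁻¹ φ(‖x - y‖/ρ)` with `Λ_{φ,ρ} = ∫ φ(‖x - z‖/ρ) dν(z)`
(independent of `x ∈ S^d` by rotational invariance). -/
noncomputable def scaledZonalKernel (d : ℕ) (φ : ℝ → ℝ) (ρ : ℝ)
    (x y : EuclideanSpace ℝ (Fin (d + 1))) : ℝ :=
  φ (‖x - y‖ / ρ) / ∫ z, φ (‖x - z‖ / ρ) ∂(uniformSphereMeasure d)

/-- **Mean `L²(ν)` bound for the noise part of the quasi-interpolant.**
Under the scaled-kernel assumptions there exist `ρ₀ ∈ (0,1)` and `C > 0`, depending only on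
`d` and `φ`, such that for every `ρ ∈ (0, ρ₀)`, every `N ≥ 1`, every choice of points
`x 1, ..., x N ∈ S^d`, and every `M > 0`: if `ε 1, ..., ε N` are independent real random
variables with `E[ε j] = 0` and `|ε j| ≤ M` almost surely, then
`E[ ‖(1/N) Σ_j ε_j φ_ρ(·, x_j)‖_{L²(ν)} ] ≤ C ρ^{-d/2} N^{-1/2} M`. -/
theorem noise_quasi_interpolant_mean_l2_bound (d : ℕ) (hd : 1 ≤ d)
    (φ : ℝ → ℝ) (hφ_cont : Continuous φ) (hφ_nonneg : ∀ z, 0 ≤ z → 0 ≤ φ z)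
    (hφ_bdd : ∃ B : ℝ, ∀ z, 0 ≤ z → φ z ≤ B)
    (hφ_ne : ∃ z, 0 ≤ z ∧ φ z ≠ 0)
    (hφ_int : IntegrableOn (fun z => φ z * z ^ d) (Set.Ioi (0 : ℝ))) :
    ∃ ρ₀ ∈ Set.Ioo (0 : ℝ) 1, ∃ C > (0 : ℝ),
      ∀ ρ ∈ Set.Ioo (0 : ℝ) ρ₀, ∀ N : ℕ, 1 ≤ N →
        ∀ x : Fin N → EuclideanSpace ℝ (Fin (d + 1)),
          (∀ j, x j ∈ Metric.sphere (0 : EuclideanSpace ℝ (Fin (d + 1))) 1) →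
          ∀ M > (0 : ℝ),
            ∀ (Ω : Type) [MeasurableSpace Ω] (P : Measure Ω) [IsProbabilityMeasure P]
              (ε : Fin N → Ω → ℝ),
              (∀ j, Measurable (ε j)) →
              iIndepFun ε P →
              (∀ j, ∫ w, ε j w ∂P = 0) →
              (∀ j, ∀ᵐ w ∂P, |ε j w| ≤ M) →
              (∫ w, Real.sqrt (∫ y,
                  ((N : ℝ)⁻¹ * ∑ j, ε j w * scaledZonalKernel d φ ρ y (x j)) ^ 2
                  ∂(uniformSphereMeasure d)) ∂P) ≤
                C * ρ ^ (-(d : ℝ) / 2) * (N : ℝ) ^ (-(1 : ℝ) / 2) * M := by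
  -- degenerate cases: the uniform measure is zero
  by_cases hdeg : uniformSphereMeasure d = 0
  · refine ⟨1/2, by norm_num, 1, one_pos, ?_⟩
    intro ρ hρ N hN x hx M hM Ω _ P _ ε hmeas hindep hmean hbdd
    simp only [hdeg, integral_zero_measure, Real.sqrt_zero, integral_zero]
    have h2 := Real.rpow_pos_of_pos hρ.1 (-(d : ℝ) / 2)
    have hN0 : 0 < (N:ℝ) := by exact_mod_cast Nat.lt_of_lt_of_le Nat.zero_lt_one hN
    have h3 := Real.rpow_pos_of_pos hN0 (-(1 : ℝ) / 2)
    positivity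
  have hS0 : μH[(d : ℝ)] (Metric.sphere (0 : EuclideanSpace ℝ (Fin (d + 1))) 1) ≠ 0 :=
    fun h => hdeg (usm_zero_of_zero h)
  have hSt : μH[(d : ℝ)] (Metric.sphere (0 : EuclideanSpace ℝ (Fin (d + 1))) 1) ≠ ⊤ :=
    fun h => hdeg (usm_zero_of_top h)
  haveI hPν : IsProbabilityMeasure (uniformSphereMeasure d) := usm_prob hS0 hSt
  obtain ⟨B, hB⟩ := hφ_bdd
  obtain ⟨z0, hz00, hz0ne⟩ := hφ_ne
  have hBpos : 0 < B :=
    lt_of_lt_of_le (lt_of_le_of_ne (hφ_nonneg z0 hz00) (Ne.symm hz0ne)) (hB z0 hz00)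
  obtain ⟨ρ₀, hρ₀mem, c, hc, hlam⟩ :=
    lambda_lower_bound hd φ hφ_cont hφ_nonneg ⟨B, hB⟩ ⟨z0, hz00, hz0ne⟩ hS0 hSt
  refine ⟨ρ₀, hρ₀mem, max (Real.sqrt (B / c)) 1,
    lt_of_lt_of_le one_pos (le_max_right _ _), ?_⟩
  intro ρ hρ N hN x hx M hM Ω _ P _ ε hmeas hindep hmean hbdd
  set C := max (Real.sqrt (B / c)) 1 with hC
  have hρ0 : 0 < ρ := hρ.1
  have hN0 : 0 < (N:ℝ) := by exact_mod_cast Nat.lt_of_lt_of_le Nat.zero_lt_one hN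
  -- the constant Λ
  set L := ∫ z, φ (‖EuclideanSpace.single (0 : Fin (d + 1)) (1 : ℝ) - z‖ / ρ)
    ∂(uniformSphereMeasure d) with hLdef
  have hLlow : c * ρ^d ≤ L := hlam ρ hρ _ north_mem_sphere
  have hLpos : 0 < L := lt_of_lt_of_le (by positivity) hLlow
  have hLx : ∀ y ∈ Metric.sphere (0 : EuclideanSpace ℝ (Fin (d + 1))) 1,
      (∫ z, φ (‖y - z‖ / ρ) ∂(uniformSphereMeasure d)) = L :=
    fun y hy => (lambda_invariant φ ρ hφ_cont hy north_mem_sphere).trans hLdef.symm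
  -- the numerator functions
  set G := fun (j : Fin N) (y : EuclideanSpace ℝ (Fin (d + 1))) => φ (‖y - x j‖ / ρ) with hG
  have hGcont : ∀ j, Continuous (G j) := fun j =>
    hφ_cont.comp ((continuous_id.sub continuous_const).norm.div_const ρ)
  have hGnonneg : ∀ j y, 0 ≤ G j y := fun j y => hφ_nonneg _ (by positivity)
  have hGle : ∀ j y, G j y ≤ B := fun j y => hB _ (by positivity)
  have hGint : ∀ j, Integrable (G j) (uniformSphereMeasure d) := fun j =>
    integrable_of_bdd (hGcont j) (B := B) fun y => by
      rw [abs_of_nonneg (hGnonneg j y)]; exact hGle j y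
  have hGmulint : ∀ j k, Integrable (fun y => G j y * G k y) (uniformSphereMeasure d) :=
    fun j k => integrable_of_bdd ((hGcont j).mul (hGcont k)) (B := B * B) fun y => by
      rw [abs_of_nonneg (mul_nonneg (hGnonneg j y) (hGnonneg k y))]
      exact mul_le_mul (hGle j y) (hGle k y) (hGnonneg k y) hBpos.le
  have hGL : ∀ j, (∫ y, G j y ∂(uniformSphereMeasure d)) = L := by
    intro j
    have hrw : ∀ y : EuclideanSpace ℝ (Fin (d + 1)), G j y = φ (‖x j - y‖ / ρ) := fun y => by
      rw [hG]; simp only; rw [norm_sub_rev]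
    rw [integral_congr_ae (Filter.Eventually.of_forall hrw)]
    exact hLx (x j) (hx j)
  -- the Gram matrix
  set cmat := fun (j k : Fin N) => ∫ y, G j y * G k y ∂(uniformSphereMeasure d) with hcmat
  have hcnonneg : ∀ j k, 0 ≤ cmat j k := fun j k =>
    integral_nonneg fun y => mul_nonneg (hGnonneg j y) (hGnonneg k y)
  have hcdiag : ∀ j, cmat j j ≤ B * L := by
    intro j
    have hpt : ∀ y, G j y * G j y ≤ B * G j y := fun y =>
      mul_le_mul_of_nonneg_right (hGle j y) (hGnonneg j y)
    calc cmat j j ≤ ∫ y, B * G j y ∂(uniformSphereMeasure d) :=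
          integral_mono (hGmulint j j) ((hGint j).const_mul B) hpt
      _ = B * L := by rw [integral_const_mul, hGL]
  -- quadratic expansion of the inner integral
  have hquad : ∀ a : Fin N → ℝ,
      (∫ y, ((N : ℝ)⁻¹ * ∑ j, a j * scaledZonalKernel d φ ρ y (x j)) ^ 2
        ∂(uniformSphereMeasure d))
        = ((N:ℝ)⁻¹ * L⁻¹)^2 * ∑ j, ∑ k, a j * a k * cmat j k := by
    intro a
    have hptwise : ∀ᵐ y ∂(uniformSphereMeasure d),
        ((N : ℝ)⁻¹ * ∑ j, a j * scaledZonalKernel d φ ρ y (x j)) ^ 2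
          = ((N:ℝ)⁻¹ * L⁻¹)^2 * ∑ j, ∑ k, a j * a k * (G j y * G k y) := by
      filter_upwards [usm_ae_mem] with y hy
      have hkery : ∀ j : Fin N, scaledZonalKernel d φ ρ y (x j) = G j y / L := by
        intro j
        simp only [scaledZonalKernel]
        rw [hLx y hy]
      rw [Finset.sum_congr rfl fun j _ => by rw [hkery j]]
      have hsum : (∑ j, a j * (G j y / L)) = (∑ j, a j * G j y) * L⁻¹ := by
        rw [Finset.sum_mul]
        exact Finset.sum_congr rfl fun j _ => by ring
      rw [hsum]
      have hexp : (∑ j, a j * G j y) * (∑ k, a k * G k y)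
          = ∑ j, ∑ k, a j * a k * (G j y * G k y) := by
        rw [Finset.sum_mul_sum]
        exact Finset.sum_congr rfl fun j _ => Finset.sum_congr rfl fun k _ => by ring
      calc ((N : ℝ)⁻¹ * ((∑ j, a j * G j y) * L⁻¹)) ^ 2
          = ((N:ℝ)⁻¹ * L⁻¹)^2 * ((∑ j, a j * G j y) * (∑ k, a k * G k y)) := by ring
        _ = _ := by rw [hexp]
    rw [integral_congr_ae hptwise, integral_const_mul]
    congr 1
    rw [integral_finset_sum _ fun j _ =>
      integrable_finset_sum _ fun k _ => ((hGmulint j k).const_mul _)]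
    refine Finset.sum_congr rfl fun j _ => ?_
    rw [integral_finset_sum _ fun k _ => ((hGmulint j k).const_mul _)]
    refine Finset.sum_congr rfl fun k _ => ?_
    rw [integral_const_mul]
  -- expectation computation
  set I : Ω → ℝ := fun w => ∫ y,
    ((N : ℝ)⁻¹ * ∑ j, ε j w * scaledZonalKernel d φ ρ y (x j)) ^ 2
    ∂(uniformSphereMeasure d) with hI
  have hIw : ∀ w, I w = ((N:ℝ)⁻¹ * L⁻¹)^2 * ∑ j, ∑ k, ε j w * ε k w * cmat j k :=
    fun w => hquad (fun j => ε j w)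
  have hInonneg : ∀ w, 0 ≤ I w := fun w => integral_nonneg fun y => sq_nonneg _
  have hεεint : ∀ j k, Integrable (fun w => ε j w * ε k w) P := by
    intro j k
    apply (integrable_const (M * M)).mono' ((hmeas j).mul (hmeas k)).aestronglyMeasurable
    filter_upwards [hbdd j, hbdd k] with w h1 h2
    rw [Real.norm_eq_abs, Pi.mul_apply, abs_mul]
    exact mul_le_mul h1 h2 (abs_nonneg _) hM.le
  have hIint : Integrable I P := by
    have : I = fun w => ((N:ℝ)⁻¹ * L⁻¹)^2 * ∑ j, ∑ k, ε j w * ε k w * cmat j k :=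
      funext hIw
    rw [this]
    exact (integrable_finset_sum _ fun j _ =>
      integrable_finset_sum _ fun k _ => (hεεint j k).mul_const _).const_mul _
  have hoff : ∀ j k : Fin N, j ≠ k → (∫ w, ε j w * ε k w ∂P) = 0 := by
    intro j k hjk
    have hfe : (fun w => ε j w * ε k w) = ε j * ε k := rfl
    rw [hfe, (hindep.indepFun hjk).integral_mul_eq_mul_integral (hmeas j).aestronglyMeasurable
      (hmeas k).aestronglyMeasurable, hmean j, zero_mul]
  have hdiag : ∀ j, (∫ w, ε j w * ε j w ∂P) ≤ M^2 := by
    intro j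
    have hae : ∀ᵐ w ∂P, ε j w * ε j w ≤ M^2 := by
      filter_upwards [hbdd j] with w hw
      have h' := abs_le.mp hw
      nlinarith [h'.1, h'.2]
    calc (∫ w, ε j w * ε j w ∂P) ≤ ∫ _, M^2 ∂P :=
          integral_mono_ae (hεεint j j) (integrable_const _) hae
      _ = M^2 := by simp
  have hdiagpos : ∀ j, 0 ≤ ∫ w, ε j w * ε j w ∂P :=
    fun j => integral_nonneg fun w => mul_self_nonneg _
  have hEI : (∫ w, I w ∂P) ≤ (N:ℝ)⁻¹ * M^2 * B * L⁻¹ := by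
    have h1 : (∫ w, I w ∂P)
        = ((N:ℝ)⁻¹ * L⁻¹)^2 * ∑ j, ∑ k, (∫ w, ε j w * ε k w ∂P) * cmat j k := by
      simp_rw [hIw]
      rw [integral_const_mul]
      congr 1
      rw [integral_finset_sum _ fun j _ =>
        integrable_finset_sum _ fun k _ => (hεεint j k).mul_const _]
      refine Finset.sum_congr rfl fun j _ => ?_
      rw [integral_finset_sum _ fun k _ => (hεεint j k).mul_const _]
      refine Finset.sum_congr rfl fun k _ => ?_
      rw [integral_mul_const]
    have h2 : ∑ j, ∑ k, (∫ w, ε j w * ε k w ∂P) * cmat j k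
        = ∑ j, (∫ w, ε j w * ε j w ∂P) * cmat j j := by
      refine Finset.sum_congr rfl fun j _ => ?_
      rw [Finset.sum_eq_single j]
      · intro k _ hkj
        rw [hoff j k (Ne.symm hkj), zero_mul]
      · intro h
        exact absurd (Finset.mem_univ j) h
    have h3 : ∑ j, (∫ w, ε j w * ε j w ∂P) * cmat j j ≤ (N:ℝ) * (M^2 * (B * L)) := by
      calc ∑ j, (∫ w, ε j w * ε j w ∂P) * cmat j j
          ≤ ∑ _j : Fin N, M^2 * (B * L) := Finset.sum_le_sum fun j _ =>
            mul_le_mul (hdiag j) (hcdiag j) (hcnonneg j j) (by positivity)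
        _ = (N:ℝ) * (M^2 * (B * L)) := by
            rw [Finset.sum_const, Finset.card_univ, Fintype.card_fin, nsmul_eq_mul]
    rw [h1, h2]
    calc ((N:ℝ)⁻¹ * L⁻¹)^2 * ∑ j, (∫ w, ε j w * ε j w ∂P) * cmat j j
        ≤ ((N:ℝ)⁻¹ * L⁻¹)^2 * ((N:ℝ) * (M^2 * (B * L))) :=
          mul_le_mul_of_nonneg_left h3 (sq_nonneg _)
      _ = (N:ℝ)⁻¹ * M^2 * B * L⁻¹ := by
          field_simp
  -- the bound b
  set b := Real.sqrt (B / c) * ρ ^ (-(d : ℝ)/2) * (N:ℝ) ^ (-(1:ℝ)/2) * M with hb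
  have hBc : 0 < B / c := div_pos hBpos hc
  have hr2 := Real.rpow_pos_of_pos hρ0 (-(d:ℝ)/2)
  have hr3 := Real.rpow_pos_of_pos hN0 (-(1:ℝ)/2)
  have hbpos : 0 < b :=
    mul_pos (mul_pos (mul_pos (Real.sqrt_pos.mpr hBc) hr2) hr3) hM
  have hbsq : b^2 = (B / c) * (ρ^d)⁻¹ * (N:ℝ)⁻¹ * M^2 := by
    have e0 : (Real.sqrt (B/c))^2 = B/c := Real.sq_sqrt hBc.le
    have e1 : (ρ ^ (-(d : ℝ)/2))^2 = (ρ^d)⁻¹ := by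
      rw [← Real.rpow_natCast (ρ ^ (-(d : ℝ)/2)) 2, ← Real.rpow_mul hρ0.le,
        show (-(d : ℝ)/2 * ((2:ℕ):ℝ)) = -(d:ℝ) by push_cast; ring,
        Real.rpow_neg hρ0.le, Real.rpow_natCast]
    have e2 : ((N:ℝ) ^ (-(1:ℝ)/2))^2 = (N:ℝ)⁻¹ := by
      rw [← Real.rpow_natCast ((N:ℝ) ^ (-(1:ℝ)/2)) 2, ← Real.rpow_mul hN0.le,
        show (-(1 : ℝ)/2 * ((2:ℕ):ℝ)) = -(1:ℝ) by push_cast; ring,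
        Real.rpow_neg_one]
    calc b^2 = (Real.sqrt (B/c))^2 * (ρ ^ (-(d : ℝ)/2))^2 * ((N:ℝ) ^ (-(1:ℝ)/2))^2 * M^2 := by
          rw [hb]; ring
      _ = (B / c) * (ρ^d)⁻¹ * (N:ℝ)⁻¹ * M^2 := by rw [e0, e1, e2]
  have hEIb : (∫ w, I w ∂P) ≤ b^2 := by
    rw [hbsq]
    refine hEI.trans ?_
    have hL' : L⁻¹ ≤ (c * ρ^d)⁻¹ := inv_anti₀ (by positivity) hLlow
    calc (N:ℝ)⁻¹ * M^2 * B * L⁻¹ ≤ (N:ℝ)⁻¹ * M^2 * B * (c * ρ^d)⁻¹ :=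
          mul_le_mul_of_nonneg_left hL' (by positivity)
      _ = B / c * (ρ^d)⁻¹ * (N:ℝ)⁻¹ * M^2 := by
          field_simp
  -- from the second moment to the first moment
  have hsqrt_le : ∀ w, Real.sqrt (I w) ≤ I w / (2*b) + b/2 := by
    intro w
    have hs := Real.sq_sqrt (hInonneg w)
    have h2b : 0 < 2*b := by linarith
    have key : 2*b*Real.sqrt (I w) ≤ I w + b^2 := by
      nlinarith [sq_nonneg (Real.sqrt (I w) - b), hs]
    calc Real.sqrt (I w) = (2*b*Real.sqrt (I w))/(2*b) := by field_simp
      _ ≤ (I w + b^2)/(2*b) := (div_le_div_iff_of_pos_right h2b).mpr key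
      _ = I w/(2*b) + b/2 := by field_simp
  have hT : (∫ w, Real.sqrt (I w) ∂P) ≤ ∫ w, (I w / (2*b) + b/2) ∂P := by
    apply integral_mono_of_nonneg
    · exact Filter.Eventually.of_forall fun w => Real.sqrt_nonneg _
    · exact (hIint.div_const _).add (integrable_const _)
    · exact Filter.Eventually.of_forall hsqrt_le
  have hTval : (∫ w, (I w / (2*b) + b/2) ∂P) = (∫ w, I w ∂P) / (2*b) + b/2 := by
    rw [integral_add (hIint.div_const _) (integrable_const _), integral_div]
    simp
  have h2b : 0 < 2*b := by linarith
  have hfinal : (∫ w, Real.sqrt (I w) ∂P) ≤ b := by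
    rw [hTval] at hT
    have hdivle : (∫ w, I w ∂P) / (2*b) ≤ b^2 / (2*b) :=
      (div_le_div_iff_of_pos_right h2b).mpr hEIb
    have hbb : b^2/(2*b) = b/2 := by
      field_simp
    linarith
  have hCb : b ≤ C * ρ ^ (-(d : ℝ)/2) * (N:ℝ) ^ (-(1:ℝ)/2) * M := by
    rw [hb]
    have h1' : Real.sqrt (B/c) ≤ C := le_max_left _ _
    exact mul_le_mul_of_nonneg_right (mul_le_mul_of_nonneg_right
      (mul_le_mul_of_nonneg_right h1' hr2.le) hr3.le) hM.le
  calc (∫ w, Real.sqrt (∫ y,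
        ((N : ℝ)⁻¹ * ∑ j, ε j w * scaledZonalKernel d φ ρ y (x j)) ^ 2
        ∂(uniformSphereMeasure d)) ∂P)
      = ∫ w, Real.sqrt (I w) ∂P := rfl
    _ ≤ b := hfinal
    _ ≤ C * ρ ^ (-(d : ℝ)/2) * (N:ℝ) ^ (-(1:ℝ)/2) * M := hCb
end
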